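/- arXiv:2009.13714 — 2 statements merged into one kernel-verified Lean document; each statement's English description precedes it below -/
import Mathlib

section
/- Let H and H' be real normed vector spaces, let (Ω, 𝒫) be a probability space, let M : H → H' be a continuous linear map with operator norm ‖M‖ ≤ G, and let A and B be H-valued random vectors that are square-integrable about a common point μ ∈ H, with ∫ ‖A − μ‖² d𝒫 ≤ σ²/m and ∫ ‖B − μ‖² d𝒫 ≤ σ²/n for reals σ ≥ 0, G ≥ 0 and positive integers m, n. Then ∫ ‖M(A − B)‖ d𝒫 ≤ √2 · G · σ · √(1/m + 1/n). -/
open MeasureTheory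

lemma aux_int_le_sqrt {Ω : Type*} [MeasurableSpace Ω] (P : Measure Ω)
    [IsProbabilityMeasure P] (f : Ω → ℝ) (hf0 : ∀ ω, 0 ≤ f ω)
    (hfm : AEStronglyMeasurable f P) (hfsq : Integrable (fun ω => f ω ^ 2) P) :
    ∫ ω, f ω ∂P ≤ Real.sqrt (∫ ω, f ω ^ 2 ∂P) := by
  have hL2 : MemLp f 2 P := (memLp_two_iff_integrable_sq hfm).2 hfsq
  have hvar := ProbabilityTheory.variance_nonneg f P
  rw [ProbabilityTheory.variance_eq_sub hL2] at hvar
  have h1 : (∫ ω, f ω ∂P) ^ 2 ≤ ∫ ω, f ω ^ 2 ∂P := by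
    have : ∫ ω, (f ^ 2) ω ∂P = ∫ ω, f ω ^ 2 ∂P := by simp [Pi.pow_apply]
    linarith [hvar, this ▸ hvar]
  calc ∫ ω, f ω ∂P = Real.sqrt ((∫ ω, f ω ∂P) ^ 2) := by
        rw [Real.sqrt_sq (integral_nonneg hf0)]
    _ ≤ Real.sqrt (∫ ω, f ω ^ 2 ∂P) := Real.sqrt_le_sqrt h1

/-- Deviation of two minibatch gradient estimates pushed through a bounded linear map:
if `M : H → H'` is continuous linear with `‖M‖ ≤ G`, and `A`, `B` are square-integrable
about `μ` with `∫ ‖A − μ‖² ≤ σ²/m`, `∫ ‖B − μ‖² ≤ σ²/n`, then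
`∫ ‖M(A − B)‖ ≤ √2 · G · σ · √(1/m + 1/n)`. -/
theorem linear_map_two_estimator_deviation
    {H : Type*} [NormedAddCommGroup H] [NormedSpace ℝ H]
    {H' : Type*} [NormedAddCommGroup H'] [NormedSpace ℝ H']
    {Ω : Type*} [MeasurableSpace Ω] (P : Measure Ω) [IsProbabilityMeasure P]
    (M : H →L[ℝ] H') (G : ℝ) (hM : ‖M‖ ≤ G)
    (A B : Ω → H) (μ : H) (σ : ℝ) (m n : ℕ)
    (hm : 0 < m) (hn : 0 < n) (hσ : 0 ≤ σ) (hG : 0 ≤ G)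
    (hAsq : Integrable (fun ω => ‖A ω - μ‖ ^ 2) P)
    (hBsq : Integrable (fun ω => ‖B ω - μ‖ ^ 2) P)
    (hAbound : ∫ ω, ‖A ω - μ‖ ^ 2 ∂P ≤ σ ^ 2 / m)
    (hBbound : ∫ ω, ‖B ω - μ‖ ^ 2 ∂P ≤ σ ^ 2 / n) :
    ∫ ω, ‖M (A ω - B ω)‖ ∂P ≤ Real.sqrt 2 * G * σ * Real.sqrt (1 / m + 1 / n) := by
  set fA : Ω → ℝ := fun ω => ‖A ω - μ‖ with hfA
  set fB : Ω → ℝ := fun ω => ‖B ω - μ‖ with hfB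
  -- measurability of fA, fB
  have hfAm : AEStronglyMeasurable fA P := by
    have : fA = fun ω => Real.sqrt (‖A ω - μ‖ ^ 2) := by
      funext ω; rw [Real.sqrt_sq (norm_nonneg _)]
    rw [this]
    exact Real.continuous_sqrt.comp_aestronglyMeasurable hAsq.aestronglyMeasurable
  have hfBm : AEStronglyMeasurable fB P := by
    have : fB = fun ω => Real.sqrt (‖B ω - μ‖ ^ 2) := by
      funext ω; rw [Real.sqrt_sq (norm_nonneg _)]
    rw [this]
    exact Real.continuous_sqrt.comp_aestronglyMeasurable hBsq.aestronglyMeasurable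
  -- integrability of fA, fB
  have hfAi : Integrable fA P := by
    refine (integrable_const (1:ℝ)).add hAsq |>.mono' hfAm ?_
    filter_upwards with ω
    have h := norm_nonneg (A ω - μ)
    simp only [fA, Real.norm_eq_abs, abs_of_nonneg h, Pi.add_apply]
    nlinarith [sq_nonneg (‖A ω - μ‖ - 1)]
  have hfBi : Integrable fB P := by
    refine (integrable_const (1:ℝ)).add hBsq |>.mono' hfBm ?_
    filter_upwards with ω
    have h := norm_nonneg (B ω - μ)
    simp only [fB, Real.norm_eq_abs, abs_of_nonneg h, Pi.add_apply]
    nlinarith [sq_nonneg (‖B ω - μ‖ - 1)]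
  -- step 1: pointwise bound
  have step1 : ∫ ω, ‖M (A ω - B ω)‖ ∂P ≤ ∫ ω, G * (fA ω + fB ω) ∂P := by
    apply integral_mono_of_nonneg
    · filter_upwards with ω; exact norm_nonneg _
    · exact ((hfAi.add hfBi).const_mul G)
    · filter_upwards with ω
      calc ‖M (A ω - B ω)‖ ≤ ‖M‖ * ‖A ω - B ω‖ := M.le_opNorm _
        _ ≤ G * (fA ω + fB ω) := by
            apply mul_le_mul hM ?_ (norm_nonneg _) hG
            calc ‖A ω - B ω‖ = ‖(A ω - μ) - (B ω - μ)‖ := by congr 1; abel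
              _ ≤ fA ω + fB ω := norm_sub_le _ _
  have hA1 : ∫ ω, fA ω ∂P ≤ Real.sqrt (σ ^ 2 / m) :=
    (aux_int_le_sqrt P fA (fun ω => norm_nonneg _) hfAm hAsq).trans
      (Real.sqrt_le_sqrt hAbound)
  have hB1 : ∫ ω, fB ω ∂P ≤ Real.sqrt (σ ^ 2 / n) :=
    (aux_int_le_sqrt P fB (fun ω => norm_nonneg _) hfBm hBsq).trans
      (Real.sqrt_le_sqrt hBbound)
  have step2 : ∫ ω, G * (fA ω + fB ω) ∂P
      ≤ G * (Real.sqrt (σ ^ 2 / m) + Real.sqrt (σ ^ 2 / n)) := by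
    rw [integral_const_mul, integral_add hfAi hfBi]
    exact mul_le_mul_of_nonneg_left (add_le_add hA1 hB1) hG
  -- numeric step
  have hm' : (0:ℝ) < m := by exact_mod_cast hm
  have hn' : (0:ℝ) < n := by exact_mod_cast hn
  have key : Real.sqrt (σ ^ 2 / m) + Real.sqrt (σ ^ 2 / n)
      ≤ Real.sqrt 2 * σ * Real.sqrt (1 / m + 1 / n) := by
    have e1 : Real.sqrt (σ ^ 2 / m) = σ * Real.sqrt (1 / m) := by
      rw [div_eq_mul_one_div, Real.sqrt_mul (sq_nonneg _), Real.sqrt_sq hσ]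
    have e2 : Real.sqrt (σ ^ 2 / n) = σ * Real.sqrt (1 / n) := by
      rw [div_eq_mul_one_div, Real.sqrt_mul (sq_nonneg _), Real.sqrt_sq hσ]
    rw [e1, e2, ← mul_add]
    have goal2 : Real.sqrt (1/m) + Real.sqrt (1/n) ≤ Real.sqrt 2 * Real.sqrt (1/m + 1/n) → σ * (Real.sqrt (1/m) + Real.sqrt (1/n)) ≤ Real.sqrt 2 * σ * Real.sqrt (1/m + 1/n) := by
      intro h
      calc σ * (Real.sqrt (1/m) + Real.sqrt (1/n)) ≤ σ * (Real.sqrt 2 * Real.sqrt (1/m + 1/n)) :=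
            mul_le_mul_of_nonneg_left h hσ
        _ = Real.sqrt 2 * σ * Real.sqrt (1/m + 1/n) := by ring
    apply goal2
    have ha : (0:ℝ) ≤ 1 / m := by positivity
    have hb : (0:ℝ) ≤ 1 / n := by positivity
    have := Real.sqrt_nonneg (1 / (m:ℝ))
    have := Real.sqrt_nonneg (1 / (n:ℝ))
    have h2 : (Real.sqrt (1/m) + Real.sqrt (1/n)) ^ 2 ≤ 2 * (1/m + 1/n) := by
      have sa := Real.sq_sqrt ha
      have sb := Real.sq_sqrt hb
      nlinarith [sq_nonneg (Real.sqrt (1/(m:ℝ)) - Real.sqrt (1/(n:ℝ)))]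
    calc Real.sqrt (1/m) + Real.sqrt (1/n)
        = Real.sqrt ((Real.sqrt (1/m) + Real.sqrt (1/n)) ^ 2) := by
          rw [Real.sqrt_sq (by positivity)]
      _ ≤ Real.sqrt (2 * (1/m + 1/n)) := Real.sqrt_le_sqrt h2
      _ = Real.sqrt 2 * Real.sqrt (1/m + 1/n) := Real.sqrt_mul (by norm_num) _
  calc ∫ ω, ‖M (A ω - B ω)‖ ∂P ≤ G * (Real.sqrt (σ ^ 2 / m) + Real.sqrt (σ ^ 2 / n)) :=
        step1.trans step2
    _ ≤ G * (Real.sqrt 2 * σ * Real.sqrt (1 / m + 1 / n)) :=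
        mul_le_mul_of_nonneg_left key hG
    _ = Real.sqrt 2 * G * σ * Real.sqrt (1 / m + 1 / n) := by ring
end

section
/- Let H and H' be real normed vector spaces (H' complete), let (Ω, 𝒫) be a probability space, let N ≥ 1 and K ≥ 1 be integers, and for each task index i ∈ {1, …, N} and step index k ∈ {1, …, K} let M_{i,k} : H → H' be a continuous linear map with operator norm ‖M_{i,k}‖ ≤ G. Let w₁, …, w_K be nonnegative reals with Σₖ wₖ = 1. For each (i, k), let A_{i,k} and B_{i,k} be H-valued Bochner-integrable random vectors that are square-integrable about a common point μ_{i,k} ∈ H, with ∫ ‖A_{i,k} − μ_{i,k}‖² d𝒫 ≤ σ²/D_tr and ∫ ‖B_{i,k} − μ_{i,k}‖² d𝒫 ≤ σ²/D_val for reals σ ≥ 0, G ≥ 0 and positive integers D_tr, D_val. Then ∫ ‖ (1/N) Σᵢ₌₁ᴺ Σₖ₌₁ᴷ wₖ · M_{i,k}(A_{i,k} − B_{i,k}) ‖ d𝒫 ≤ √2 · G · σ · √(1/D_tr + 1/D_val). -/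
open MeasureTheory

lemma my_int_norm_le_sqrt {Ω : Type*} [MeasurableSpace Ω] (P : Measure Ω)
    [IsProbabilityMeasure P] {H : Type*} [NormedAddCommGroup H] {f : Ω → H}
    (hmeas : AEStronglyMeasurable f P)
    (hsq : Integrable (fun ω => ‖f ω‖ ^ 2) P) {C : ℝ}
    (hb : ∫ ω, ‖f ω‖ ^ 2 ∂P ≤ C) :
    ∫ ω, ‖f ω‖ ∂P ≤ Real.sqrt C := by
  have hmem : MemLp (fun ω => ‖f ω‖) 2 P :=
    (memLp_two_iff_integrable_sq hmeas.norm).2 (by simpa using hsq)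
  have h1 : MemLp (fun _ : Ω => (1 : ℝ)) 2 P := memLp_const 1
  have hpq : Real.HolderConjugate 2 2 := Real.HolderConjugate.two_two
  have this := integral_mul_le_Lp_mul_Lq_of_nonneg hpq
    (f := fun ω => ‖f ω‖) (g := fun _ => (1 : ℝ))
    (Filter.Eventually.of_forall fun ω => norm_nonneg _)
    (Filter.Eventually.of_forall fun ω => zero_le_one)
    (by simpa using hmem) (by simpa using h1)
  simp only [mul_one, Real.one_rpow, integral_const, measure_univ, ENNReal.toReal_one,
    smul_eq_mul, one_mul] at this
  have h2 : (∫ ω, ‖f ω‖ ^ (2:ℝ) ∂P) = ∫ ω, ‖f ω‖ ^ 2 ∂P := by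
    congr 1; ext ω; rw [← Real.rpow_natCast ‖f ω‖ 2]; norm_num
  rw [h2] at this
  calc ∫ ω, ‖f ω‖ ∂P ≤ (∫ ω, ‖f ω‖ ^ 2 ∂P) ^ (1/2 : ℝ) := by
        simpa only [probReal_univ, Real.one_rpow, mul_one] using this
    _ ≤ C ^ (1/2 : ℝ) := by
        apply Real.rpow_le_rpow (integral_nonneg fun ω => by positivity) hb (by norm_num)
    _ = Real.sqrt C := by rw [Real.sqrt_eq_rpow]

lemma my_sqrt_add_le {a b : ℝ} (ha : 0 ≤ a) (hb : 0 ≤ b) :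
    Real.sqrt a + Real.sqrt b ≤ Real.sqrt 2 * Real.sqrt (a + b) := by
  rw [← Real.sqrt_mul (by norm_num : (0:ℝ) ≤ 2)]
  have h := Real.sq_sqrt ha
  have h' := Real.sq_sqrt hb
  have hna := Real.sqrt_nonneg a
  have hnb := Real.sqrt_nonneg b
  have key : (Real.sqrt a + Real.sqrt b) ^ 2 ≤ 2 * (a + b) := by
    nlinarith [sq_nonneg (Real.sqrt a - Real.sqrt b)]
  exact (Real.le_sqrt (by positivity) (by positivity)).2 key

/-- Proposition 1 of the paper in explicit form: the expected norm of the weighted,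
task-averaged difference of the two minibatch gradient estimates, pushed through the
per-task, per-step Jacobians `M i k` with `‖M i k‖ ≤ G`, is at most
`√2 · G · σ · √(1/D_tr + 1/D_val)`. -/
theorem lft_meta_gradient_difference_bound
    {H : Type*} [NormedAddCommGroup H] [NormedSpace ℝ H]
    {H' : Type*} [NormedAddCommGroup H'] [NormedSpace ℝ H'] [CompleteSpace H']
    {Ω : Type*} [MeasurableSpace Ω] (P : Measure Ω) [IsProbabilityMeasure P]
    (N K : ℕ) (hN : 1 ≤ N) (hK : 1 ≤ K)
    (M : Fin N → Fin K → H →L[ℝ] H') (G : ℝ) (hG : 0 ≤ G)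
    (hM : ∀ i k, ‖M i k‖ ≤ G)
    (w : Fin K → ℝ) (hw : ∀ k, 0 ≤ w k) (hwsum : ∑ k, w k = 1)
    (A B : Fin N → Fin K → Ω → H) (μ : Fin N → Fin K → H)
    (σ : ℝ) (hσ : 0 ≤ σ) (Dtr Dval : ℕ) (hDtr : 0 < Dtr) (hDval : 0 < Dval)
    (hAint : ∀ i k, Integrable (A i k) P)
    (hBint : ∀ i k, Integrable (B i k) P)
    (hAsq : ∀ i k, Integrable (fun ω => ‖A i k ω - μ i k‖ ^ 2) P)
    (hBsq : ∀ i k, Integrable (fun ω => ‖B i k ω - μ i k‖ ^ 2) P)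
    (hAbound : ∀ i k, ∫ ω, ‖A i k ω - μ i k‖ ^ 2 ∂P ≤ σ ^ 2 / Dtr)
    (hBbound : ∀ i k, ∫ ω, ‖B i k ω - μ i k‖ ^ 2 ∂P ≤ σ ^ 2 / Dval) :
    ∫ ω, ‖(N : ℝ)⁻¹ • ∑ i, ∑ k, w k • M i k (A i k ω - B i k ω)‖ ∂P ≤
      Real.sqrt 2 * G * σ * Real.sqrt (1 / Dtr + 1 / Dval) := by
  have hIA : ∀ i k, Integrable (fun ω => ‖A i k ω - μ i k‖) P := fun i k =>
    ((hAint i k).sub (integrable_const _)).norm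
  have hIB : ∀ i k, Integrable (fun ω => ‖B i k ω - μ i k‖) P := fun i k =>
    ((hBint i k).sub (integrable_const _)).norm
  have hEA : ∀ i k, ∫ ω, ‖A i k ω - μ i k‖ ∂P ≤ σ * Real.sqrt (1 / Dtr) := by
    intro i k
    have h := my_int_norm_le_sqrt P
      ((hAint i k).aestronglyMeasurable.sub aestronglyMeasurable_const)
      (hAsq i k) (hAbound i k)
    calc ∫ ω, ‖A i k ω - μ i k‖ ∂P ≤ Real.sqrt (σ ^ 2 / Dtr) := h
      _ = σ * Real.sqrt (1 / Dtr) := by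
          rw [show σ ^ 2 / (Dtr : ℝ) = σ ^ 2 * (1 / Dtr) by ring,
            Real.sqrt_mul (sq_nonneg σ), Real.sqrt_sq hσ]
  have hEB : ∀ i k, ∫ ω, ‖B i k ω - μ i k‖ ∂P ≤ σ * Real.sqrt (1 / Dval) := by
    intro i k
    have h := my_int_norm_le_sqrt P
      ((hBint i k).aestronglyMeasurable.sub aestronglyMeasurable_const)
      (hBsq i k) (hBbound i k)
    calc ∫ ω, ‖B i k ω - μ i k‖ ∂P ≤ Real.sqrt (σ ^ 2 / Dval) := h
      _ = σ * Real.sqrt (1 / Dval) := by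
          rw [show σ ^ 2 / (Dval : ℝ) = σ ^ 2 * (1 / Dval) by ring,
            Real.sqrt_mul (sq_nonneg σ), Real.sqrt_sq hσ]
  set g : Ω → ℝ := fun ω =>
    (N : ℝ)⁻¹ * ∑ i, ∑ k, w k * (G * (‖A i k ω - μ i k‖ + ‖B i k ω - μ i k‖)) with hgdef
  have hg : Integrable g P := by
    apply Integrable.const_mul
    apply integrable_finset_sum _ fun i _ => integrable_finset_sum _ fun k _ => ?_
    exact ((((hIA i k).add (hIB i k)).const_mul G).const_mul (w k))
  have hptwise : ∀ ω,
      ‖(N : ℝ)⁻¹ • ∑ i, ∑ k, w k • M i k (A i k ω - B i k ω)‖ ≤ g ω := by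
    intro ω
    rw [norm_smul, Real.norm_eq_abs, abs_of_nonneg (by positivity : (0:ℝ) ≤ (N:ℝ)⁻¹)]
    apply mul_le_mul_of_nonneg_left _ (by positivity : (0:ℝ) ≤ (N:ℝ)⁻¹)
    refine le_trans (norm_sum_le _ _) (Finset.sum_le_sum fun i _ => ?_)
    refine le_trans (norm_sum_le _ _) (Finset.sum_le_sum fun k _ => ?_)
    rw [norm_smul, Real.norm_eq_abs, abs_of_nonneg (hw k)]
    apply mul_le_mul_of_nonneg_left _ (hw k)
    calc ‖M i k (A i k ω - B i k ω)‖ ≤ G * ‖A i k ω - B i k ω‖ :=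
          (M i k).le_of_opNorm_le (hM i k) _
      _ ≤ G * (‖A i k ω - μ i k‖ + ‖B i k ω - μ i k‖) := by
          apply mul_le_mul_of_nonneg_left _ hG
          calc ‖A i k ω - B i k ω‖
              = ‖(A i k ω - μ i k) - (B i k ω - μ i k)‖ := by rw [sub_sub_sub_cancel_right]
            _ ≤ _ := norm_sub_le _ _
  have step1 : ∫ ω, ‖(N : ℝ)⁻¹ • ∑ i, ∑ k, w k • M i k (A i k ω - B i k ω)‖ ∂P ≤
      ∫ ω, g ω ∂P :=
    integral_mono_of_nonneg (Filter.Eventually.of_forall fun ω => norm_nonneg _) hg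
      (Filter.Eventually.of_forall hptwise)
  have hintw : ∀ (i : Fin N) (k : Fin K),
      Integrable (fun ω => w k * (G * (‖A i k ω - μ i k‖ + ‖B i k ω - μ i k‖))) P :=
    fun i k => (((hIA i k).add (hIB i k)).const_mul G).const_mul (w k)
  have hgint : ∫ ω, g ω ∂P = (N : ℝ)⁻¹ * ∑ i, ∑ k, w k *
      (G * ((∫ ω, ‖A i k ω - μ i k‖ ∂P) + ∫ ω, ‖B i k ω - μ i k‖ ∂P)) := by
    rw [hgdef, integral_const_mul]
    congr 1
    rw [integral_finset_sum _ fun i _ => integrable_finset_sum _ fun k _ => hintw i k]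
    refine Finset.sum_congr rfl fun i _ => ?_
    rw [integral_finset_sum _ fun k _ => hintw i k]
    refine Finset.sum_congr rfl fun k _ => ?_
    rw [integral_const_mul, integral_const_mul, integral_add (hIA i k) (hIB i k)]
  have hNpos : (0:ℝ) < (N : ℝ) := by exact_mod_cast hN
  have step2 : ∫ ω, g ω ∂P ≤ G * σ * (Real.sqrt (1 / Dtr) + Real.sqrt (1 / Dval)) := by
    rw [hgint]
    have hsum : ∑ i : Fin N, ∑ k, w k *
        (G * ((∫ ω, ‖A i k ω - μ i k‖ ∂P) + ∫ ω, ‖B i k ω - μ i k‖ ∂P)) ≤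
        ∑ i : Fin N, ∑ k, w k *
        (G * (σ * Real.sqrt (1 / Dtr) + σ * Real.sqrt (1 / Dval))) := by
      refine Finset.sum_le_sum fun i _ => Finset.sum_le_sum fun k _ => ?_
      apply mul_le_mul_of_nonneg_left _ (hw k)
      apply mul_le_mul_of_nonneg_left _ hG
      exact add_le_add (hEA i k) (hEB i k)
    have hconst : ∑ i : Fin N, ∑ k, w k *
        (G * (σ * Real.sqrt (1 / Dtr) + σ * Real.sqrt (1 / Dval))) =
        (N : ℝ) * (G * (σ * Real.sqrt (1 / Dtr) + σ * Real.sqrt (1 / Dval))) := by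
      simp [← Finset.sum_mul, hwsum]
    calc (N : ℝ)⁻¹ * ∑ i, ∑ k, w k *
        (G * ((∫ ω, ‖A i k ω - μ i k‖ ∂P) + ∫ ω, ‖B i k ω - μ i k‖ ∂P))
        ≤ (N : ℝ)⁻¹ * ((N : ℝ) * (G * (σ * Real.sqrt (1 / Dtr) + σ * Real.sqrt (1 / Dval)))) := by
          apply mul_le_mul_of_nonneg_left _ (by positivity)
          rw [← hconst]; exact hsum
      _ = G * σ * (Real.sqrt (1 / Dtr) + Real.sqrt (1 / Dval)) := by
          field_simp
  have step3 : G * σ * (Real.sqrt (1 / Dtr) + Real.sqrt (1 / Dval)) ≤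
      Real.sqrt 2 * G * σ * Real.sqrt (1 / Dtr + 1 / Dval) := by
    have h := my_sqrt_add_le (a := 1 / (Dtr:ℝ)) (b := 1 / (Dval:ℝ))
      (by positivity) (by positivity)
    calc G * σ * (Real.sqrt (1 / Dtr) + Real.sqrt (1 / Dval))
        ≤ G * σ * (Real.sqrt 2 * Real.sqrt (1 / Dtr + 1 / Dval)) := by
          apply mul_le_mul_of_nonneg_left h (by positivity)
      _ = Real.sqrt 2 * G * σ * Real.sqrt (1 / Dtr + 1 / Dval) := by ring
  exact le_trans step1 (le_trans step2 step3)
end
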